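/- (L¹ uncertainty, finite measure, median zero.) Let (Ω,d,μ) be a metric measure space with μ(Ω) < ∞ whose isoperimetric profile I is concave, continuous, I(0) = 0, strictly positive on (0, μ(Ω)), symmetric about μ(Ω)/2, and increasing on (0, μ(Ω)/2]. Set Φ(t) = min{t, μ(Ω)/2}/I(min{t, μ(Ω)/2}), and let w : Ω → (0,∞) be an isoperimetric weight with constant C(w) = sup_{r>0} (1/r)·Φ(μ{w ≤ r}) < ∞. Let α > 0 and let f : Ω → ℝ be Lipschitz and integrable with |∇f| and w^α f integrable, such that 0 is a median of f, and assume the co-area inequality for f: ∫_{−∞}^{∞} I(μ{f > s}) ds ≤ ∫_Ω |∇f| dμ. Then for every r > 0, ∫_Ω |f| dμ ≤ 2 C(w) r ∫_Ω |∇f| dμ + 2 r^{−α} ∫_Ω w^α |f| dμ. -/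

import Mathlib

open MeasureTheory Filter Set Topology
open scoped ENNReal NNReal

/-- The modulus of the gradient of `f` at `x`:
`|∇f|(x) = limsup_{y→x} |f(x) - f(y)| / d(x,y)`. -/
noncomputable def gradMod {Ω : Type*} [MetricSpace Ω] (f : Ω → ℝ) (x : Ω) : ℝ :=
  Filter.limsup (fun y => |f x - f y| / dist x y) (𝓝[≠] x)

/-- The Minkowski content (perimeter) of a set `A`:
`μ⁺(A) = liminf_{h→0⁺} (μ(A_h) - μ(A))/h`, where `A_h` is the open `h`-thickening of `A`. -/
noncomputable def minkContent {Ω : Type*} [MetricSpace Ω] [MeasurableSpace Ω]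
    (μ : Measure Ω) (A : Set Ω) : ℝ≥0∞ :=
  Filter.liminf (fun h : ℝ => (μ (Metric.thickening h A) - μ A) / ENNReal.ofReal h)
    (𝓝[>] (0 : ℝ))

/-- The isoperimetric profile of `(Ω,d,μ)`:
`I(t) = inf {μ⁺(A) : A Borel, μ(A) = t}`. -/
noncomputable def isoProfile {Ω : Type*} [MetricSpace Ω] [MeasurableSpace Ω]
    (μ : Measure Ω) (t : ℝ≥0∞) : ℝ≥0∞ :=
  ⨅ (A : Set Ω) (_ : MeasurableSet A) (_ : μ A = t), minkContent μ A

/-- `m` is a median of `f` with respect to `μ`. -/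
def IsMedian {Ω : Type*} [MeasurableSpace Ω] (μ : Measure Ω) (f : Ω → ℝ) (m : ℝ) : Prop :=
  μ Set.univ / 2 ≤ μ {x | m ≤ f x} ∧ μ Set.univ / 2 ≤ μ {x | f x ≤ m}

/-- `Φ(t) = min{t, V/2} / I(min{t, V/2})` where `V = μ(Ω)`. -/
noncomputable def PhiIso (V : ℝ) (I : ℝ → ℝ) (t : ℝ) : ℝ :=
  min t (V / 2) / I (min t (V / 2))

lemma gradMod_nonneg' {Ω : Type*} [MetricSpace Ω] (f : Ω → ℝ) (x : Ω) :
    0 ≤ gradMod f x := by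
  unfold gradMod
  rw [Filter.limsup_eq]
  set s : Set ℝ := {a | ∀ᶠ y in 𝓝[≠] x, |f x - f y| / dist x y ≤ a} with hs
  by_cases h : ∀ a ∈ s, 0 ≤ a
  · exact Real.sInf_nonneg h
  · push_neg at h
    obtain ⟨a, ha, ha0⟩ := h
    rcases eq_or_neBot (𝓝[≠] x) with hb | hb
    · have hsu : s = univ := by
        ext b; simp [hs, hb]
      have : ¬ BddBelow (univ : Set ℝ) := by
        rintro ⟨c, hc⟩
        have h1 := hc (mem_univ (c - 1))
        linarith
      rw [hsu, csInf_of_not_bddBelow this, Real.sInf_empty]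
    · rw [hs, mem_setOf_eq] at ha
      obtain ⟨y, hy⟩ := ha.exists
      have h0 : 0 ≤ |f x - f y| / dist x y := div_nonneg (abs_nonneg _) dist_nonneg
      linarith

/-- **L¹ uncertainty, finite measure, median zero.**
If `w` is an isoperimetric weight with constant `C`, `α > 0` and `f` is Lipschitz,
integrable, with `|∇f|` and `w^α f` integrable, `0` a median of `f`, and `f` satisfies
the co-area inequality, then for every `r > 0`,
`∫|f| dμ ≤ 2 C r ∫|∇f| dμ + 2 r^{-α} ∫ w^α |f| dμ`. -/
theorem l1_uncertainty_median_zero {Ω : Type*} [MetricSpace Ω] [MeasurableSpace Ω]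
    [BorelSpace Ω] (μ : Measure Ω) [IsFiniteMeasure μ] [IsFiniteMeasureOnCompacts μ]
    (I : ℝ → ℝ)
    (hIprof : ∀ t : ℝ, 0 ≤ t → ENNReal.ofReal t < μ Set.univ →
      ENNReal.ofReal (I t) = isoProfile μ (ENNReal.ofReal t))
    (hIconc : ConcaveOn ℝ (Set.Icc 0 (μ Set.univ).toReal) I)
    (hIcont : ContinuousOn I (Set.Icc 0 (μ Set.univ).toReal))
    (hI0 : I 0 = 0)
    (hIpos : ∀ t : ℝ, 0 < t → t < (μ Set.univ).toReal → 0 < I t)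
    (hIsym : ∀ t ∈ Set.Icc 0 (μ Set.univ).toReal, I ((μ Set.univ).toReal - t) = I t)
    (hImono : MonotoneOn I (Set.Ioc 0 ((μ Set.univ).toReal / 2)))
    (w : Ω → ℝ) (hw_meas : Measurable w) (hw_pos : ∀ x, 0 < w x)
    (C : ℝ)
    (hC : ∀ r : ℝ, 0 < r →
      PhiIso (μ Set.univ).toReal I ((μ {x | w x ≤ r}).toReal) ≤ C * r)
    (α : ℝ) (hα : 0 < α)
    (K : ℝ≥0) (f : Ω → ℝ) (hlip : LipschitzWith K f)
    (hfint : Integrable f μ) (hgint : Integrable (gradMod f) μ)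
    (hwfint : Integrable (fun x => w x ^ α * f x) μ)
    (hmed : IsMedian μ f 0)
    (hcoarea : ∫⁻ s : ℝ, ENNReal.ofReal (I ((μ {x | s < f x}).toReal)) ≤
      ENNReal.ofReal (∫ x, gradMod f x ∂μ)) :
    ∀ r : ℝ, 0 < r →
      ∫ x, |f x| ∂μ ≤
        2 * C * r * ∫ x, gradMod f x ∂μ + 2 * r ^ (-α) * ∫ x, w x ^ α * |f x| ∂μ := by
  intro r hr
  have hfm : Measurable f := hlip.continuous.measurable
  set V : ℝ := (μ Set.univ).toReal with hVdef
  have hVnn : (0:ℝ) ≤ V := ENNReal.toReal_nonneg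
  have hμfin : μ Set.univ ≠ ∞ := measure_ne_top μ _
  have hhalf : (μ Set.univ / 2).toReal = V / 2 := by
    rw [ENNReal.toReal_div, hVdef]; norm_num
  -- nonnegativity of I on [0, V/2]
  have Inn : ∀ t : ℝ, 0 ≤ t → t ≤ V / 2 → 0 ≤ I t := by
    intro t ht ht2
    rcases ht.eq_or_lt with h | h
    · rw [← h, hI0]
    · exact (hIpos t h (by linarith)).le
  -- the set S = {w ≤ r}
  set S : Set Ω := {x | w x ≤ r} with hSdef
  have hS : MeasurableSet S := hw_meas measurableSet_Iic
  set b : ℝ := (μ S).toReal with hbdef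
  have hb0 : (0:ℝ) ≤ b := ENNReal.toReal_nonneg
  have hCr : 0 ≤ C * r := by
    have h0 : 0 ≤ PhiIso V I b := by
      unfold PhiIso
      rcases (le_min hb0 (by linarith : (0:ℝ) ≤ V / 2)).eq_or_lt with h | h
      · rw [← h, hI0]; simp
      · have hb2 : min b (V / 2) ≤ V / 2 := min_le_right _ _
        have hV : 0 < V := by linarith
        exact div_nonneg (by linarith) (hIpos _ h (by linarith)).le
    exact h0.trans (hC r hr)
  -- Key isoperimetric lemma
  have keylem : ∀ A : Set Ω, μ A ≤ μ Set.univ / 2 →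
      (μ (A ∩ S)).toReal ≤ C * r * I ((μ A).toReal) := by
    intro A hA
    have ha2 : (μ A).toReal ≤ V / 2 := by
      have := ENNReal.toReal_mono (ne_top_of_le_ne_top hμfin ENNReal.half_le_self) hA
      rwa [hhalf] at this
    set a : ℝ := (μ A).toReal with hadef
    have ha0 : (0:ℝ) ≤ a := ENNReal.toReal_nonneg
    set m : ℝ := min a b with hmdef
    have hm_le : (μ (A ∩ S)).toReal ≤ m :=
      le_min (ENNReal.toReal_mono (measure_ne_top μ _) (measure_mono inter_subset_left))
        (ENNReal.toReal_mono (measure_ne_top μ _) (measure_mono inter_subset_right))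
    have hm0 : (0:ℝ) ≤ m := le_min ha0 hb0
    have hma : m ≤ a := min_le_left _ _
    set b' : ℝ := min b (V / 2) with hb'def
    have hmb' : m ≤ b' := le_min (min_le_right _ _) (by
      calc m ≤ a := hma
        _ ≤ V / 2 := ha2)
    have hb'2 : b' ≤ V / 2 := min_le_right _ _
    suffices h : m ≤ C * r * I a from hm_le.trans h
    rcases hm0.eq_or_lt with h0 | hm
    · rw [← h0]; exact mul_nonneg hCr (Inn a ha0 ha2)
    · have hb'0 : 0 < b' := lt_of_lt_of_le hm hmb'
      have hV : 0 < V := by linarith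
      have hIm : 0 < I m := hIpos m hm (by linarith)
      have hIb' : 0 < I b' := hIpos b' hb'0 (by linarith)
      have haa : 0 < a := lt_of_lt_of_le hm hma
      have hIa : 0 < I a := hIpos a haa (by linarith)
      have hconc : (m / b') * I b' ≤ I m := by
        have h0mem : (0:ℝ) ∈ Icc (0:ℝ) V := ⟨le_rfl, hV.le⟩
        have hb'mem : b' ∈ Icc (0:ℝ) V := ⟨hb'0.le, by linarith⟩
        have hl1 : (0:ℝ) ≤ 1 - m / b' := by
          have : m / b' ≤ 1 := (div_le_one hb'0).mpr hmb'
          linarith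
        have hl2 : (0:ℝ) ≤ m / b' := div_nonneg hm.le hb'0.le
        have key := hIconc.2 h0mem hb'mem hl1 hl2 (by ring)
        simp only [smul_eq_mul, mul_zero, zero_add, hI0] at key
        rwa [div_mul_cancel₀ _ hb'0.ne'] at key
      have hq : m / I m ≤ C * r := by
        have h1 : m / I m ≤ b' / I b' := by
          rw [div_le_div_iff₀ hIm hIb']
          have e : b' * (m / b' * I b') = m * I b' := by
            field_simp
          nlinarith [mul_le_mul_of_nonneg_left hconc hb'0.le]
        have h2 : b' / I b' ≤ C * r := by
          have h3 := hC r hr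
          unfold PhiIso at h3
          exact h3
        linarith
      have hImIa : I m ≤ I a :=
        hImono ⟨hm, by linarith⟩ ⟨haa, ha2⟩ hma
      calc m = (m / I m) * I m := (div_mul_cancel₀ m hIm.ne').symm
        _ ≤ (C * r) * I a := mul_le_mul hq hImIa hIm.le hCr
  -- median consequences
  have hmeas_le : ∀ t : ℝ, MeasurableSet {x | f x ≤ t} :=
    fun t => hfm measurableSet_Iic
  have hmed1 : ∀ t : ℝ, 0 < t → μ {x | t < f x} ≤ μ Set.univ / 2 := by
    intro t ht
    have hsub : {x | t < f x} ⊆ {x | f x ≤ 0}ᶜ := by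
      intro x hx hx'
      simp only [mem_setOf_eq] at hx hx'
      linarith
    calc μ {x | t < f x} ≤ μ ({x | f x ≤ 0}ᶜ) := measure_mono hsub
      _ = μ Set.univ - μ {x | f x ≤ 0} := measure_compl (hmeas_le 0) (measure_ne_top μ _)
      _ ≤ μ Set.univ - μ Set.univ / 2 := tsub_le_tsub_left hmed.2 _
      _ = μ Set.univ / 2 := ENNReal.sub_half hμfin
  have hmed2 : ∀ t : ℝ, 0 < t → μ {x | f x ≤ -t} ≤ μ Set.univ / 2 := by
    intro t ht
    have hsub : {x | f x ≤ -t} ⊆ {x | 0 ≤ f x}ᶜ := by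
      intro x hx hx'
      simp only [mem_setOf_eq] at hx hx'
      linarith
    calc μ {x | f x ≤ -t} ≤ μ ({x | 0 ≤ f x}ᶜ) := measure_mono hsub
      _ = μ Set.univ - μ {x | 0 ≤ f x} :=
          measure_compl (measurableSet_le measurable_const hfm) (measure_ne_top μ _)
      _ ≤ μ Set.univ - μ Set.univ / 2 := tsub_le_tsub_left hmed.1 _
      _ = μ Set.univ / 2 := ENNReal.sub_half hμfin
  -- symmetry consequence
  have hsymb : ∀ t : ℝ, 0 < t →
      I ((μ {x | f x < -t}).toReal) ≤ I ((μ {x | -t < f x}).toReal) := by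
    intro t ht
    set a' : ℝ := (μ {x | f x < -t}).toReal with ha'def
    set a'' : ℝ := (μ {x | f x ≤ -t}).toReal with ha''def
    have hcompl : (μ {x | -t < f x}).toReal = V - a'' := by
      have hset : {x : Ω | -t < f x} = {x | f x ≤ -t}ᶜ := by
        ext x; simp [not_le]
      rw [hset, measure_compl (hmeas_le (-t)) (measure_ne_top μ _),
        ENNReal.toReal_sub_of_le (measure_mono (subset_univ _)) hμfin]
    have ha''2 : a'' ≤ V / 2 := by
      have := ENNReal.toReal_mono (ne_top_of_le_ne_top hμfin ENNReal.half_le_self) (hmed2 t ht)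
      rwa [hhalf] at this
    have hss : {x : Ω | f x < -t} ⊆ {x | f x ≤ -t} :=
      setOf_subset_setOf.mpr fun x hx => hx.le
    have ha'le : a' ≤ a'' :=
      ENNReal.toReal_mono (measure_ne_top μ _) (measure_mono hss)
    have ha''mem : a'' ∈ Icc (0:ℝ) V :=
      ⟨ENNReal.toReal_nonneg, ENNReal.toReal_mono hμfin (measure_mono (subset_univ _))⟩
    rw [hcompl, hIsym a'' ha''mem]
    rcases (ENNReal.toReal_nonneg : (0:ℝ) ≤ a').eq_or_lt with h | h
    · rw [← ha'def] at h
      rw [← h, hI0]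
      exact Inn a'' ENNReal.toReal_nonneg ha''2
    · exact hImono ⟨h, by linarith⟩ ⟨lt_of_lt_of_le h ha'le, ha''2⟩ ha'le
  -- notation
  set T1 : ℝ := ∫ x, gradMod f x ∂μ with hT1def
  set T2 : ℝ := ∫ x, w x ^ α * |f x| ∂μ with hT2def
  have hT1 : 0 ≤ T1 := integral_nonneg fun x => gradMod_nonneg' f x
  have hT2 : 0 ≤ T2 := integral_nonneg fun x =>
    mul_nonneg (Real.rpow_nonneg (hw_pos x).le α) (abs_nonneg _)
  have hwabs : Integrable (fun x => w x ^ α * |f x|) μ := by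
    refine hwfint.abs.congr (ae_of_all _ fun x => ?_)
    simp [abs_mul, abs_of_nonneg (Real.rpow_nonneg (hw_pos x).le α)]
  set G : ℝ → ℝ≥0∞ := fun s => ENNReal.ofReal (I ((μ {x | s < f x}).toReal)) with hGdef
  set ν : Measure Ω := μ.restrict S with hνdef
  -- Layer cake for positive part
  have lay1 : ∫⁻ x, ENNReal.ofReal (max (f x) 0) ∂ν
      = ∫⁻ t in Ioi (0:ℝ), ν {x | t < max (f x) 0} :=
    lintegral_eq_lintegral_meas_lt ν (ae_of_all _ fun x => le_max_right _ _)
      ((hfm.max measurable_const).aemeasurable)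
  have lay2 : ∫⁻ x, ENNReal.ofReal (max (-f x) 0) ∂ν
      = ∫⁻ t in Ioi (0:ℝ), ν {x | t < max (-f x) 0} :=
    lintegral_eq_lintegral_meas_lt ν (ae_of_all _ fun x => le_max_right _ _)
      ((hfm.neg.max measurable_const).aemeasurable)
  -- bound on positive part
  have bnd1 : ∫⁻ t in Ioi (0:ℝ), ν {x | t < max (f x) 0}
      ≤ ENNReal.ofReal (C * r) * ∫⁻ t in Ioi (0:ℝ), G t := by
    rw [← lintegral_const_mul' _ _ ENNReal.ofReal_ne_top]
    refine setLIntegral_mono' measurableSet_Ioi fun t ht => ?_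
    have htpos : (0:ℝ) < t := ht
    have hseteq : {x : Ω | t < max (f x) 0} = {x | t < f x} := by
      ext x
      simp only [mem_setOf_eq, lt_max_iff]
      exact or_iff_left (asymm htpos)
    rw [hseteq, hνdef, Measure.restrict_apply (measurableSet_lt measurable_const hfm)]
    calc μ ({x | t < f x} ∩ S)
        = ENNReal.ofReal ((μ ({x | t < f x} ∩ S)).toReal) :=
          (ENNReal.ofReal_toReal (measure_ne_top μ _)).symm
      _ ≤ ENNReal.ofReal (C * r * I ((μ {x | t < f x}).toReal)) :=
          ENNReal.ofReal_le_ofReal (keylem _ (hmed1 t htpos))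
      _ = ENNReal.ofReal (C * r) * G t := by
          rw [ENNReal.ofReal_mul hCr]
  -- bound on negative part
  have bnd2 : ∫⁻ t in Ioi (0:ℝ), ν {x | t < max (-f x) 0}
      ≤ ENNReal.ofReal (C * r) * ∫⁻ t in Ioi (0:ℝ), G (-t) := by
    rw [← lintegral_const_mul' _ _ ENNReal.ofReal_ne_top]
    refine setLIntegral_mono' measurableSet_Ioi fun t ht => ?_
    have htpos : (0:ℝ) < t := ht
    have hseteq : {x : Ω | t < max (-f x) 0} = {x | f x < -t} := by
      ext x
      simp only [mem_setOf_eq, lt_max_iff]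
      rw [or_iff_left (asymm htpos), lt_neg]
    rw [hseteq, hνdef, Measure.restrict_apply (measurableSet_lt hfm measurable_const)]
    calc μ ({x | f x < -t} ∩ S)
        = ENNReal.ofReal ((μ ({x | f x < -t} ∩ S)).toReal) :=
          (ENNReal.ofReal_toReal (measure_ne_top μ _)).symm
      _ ≤ ENNReal.ofReal (C * r * I ((μ {x | f x < -t}).toReal)) := by
          refine ENNReal.ofReal_le_ofReal (keylem _ ?_)
          exact le_trans
            (measure_mono (setOf_subset_setOf.mpr fun x hx => hx.le)) (hmed2 t htpos)
      _ ≤ ENNReal.ofReal (C * r) * G (-t) := by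
          rw [ENNReal.ofReal_mul hCr]
          exact mul_le_mul_right (ENNReal.ofReal_le_ofReal (hsymb t htpos)) _
  -- change of variables for the negative part
  have negint : ∫⁻ t in Ioi (0:ℝ), G (-t) = ∫⁻ s in Iio (0:ℝ), G s := by
    have hpre : (Neg.neg : ℝ → ℝ) ⁻¹' (Iio 0) = Ioi 0 := by
      ext t; simp
    have := (Measure.measurePreserving_neg (volume : Measure ℝ)).setLIntegral_comp_preimage_emb
      measurableEmbedding_neg G (Iio 0)
    rwa [hpre] at this
  -- coarea bound
  have hGsum : (∫⁻ t in Ioi (0:ℝ), G t) + ∫⁻ s in Iio (0:ℝ), G s ≤ ENNReal.ofReal T1 := by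
    have hdisj : Disjoint (Ioi (0:ℝ)) (Iio 0) :=
      Set.disjoint_left.mpr fun x hx hx' => lt_asymm (show (0:ℝ) < x from hx) (show x < 0 from hx')
    calc (∫⁻ t in Ioi (0:ℝ), G t) + ∫⁻ s in Iio (0:ℝ), G s
        = ∫⁻ s in Ioi (0:ℝ) ∪ Iio (0:ℝ), G s := (lintegral_union measurableSet_Iio hdisj).symm
      _ ≤ ∫⁻ s, G s := setLIntegral_le_lintegral _ _
      _ ≤ ENNReal.ofReal T1 := hcoarea
  -- piece 1 : over S
  have piece1 : ∫⁻ x in S, ENNReal.ofReal |f x| ∂μ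
      ≤ ENNReal.ofReal (C * r) * ENNReal.ofReal T1 := by
    have habs : ∀ x : Ω, ENNReal.ofReal |f x|
        = ENNReal.ofReal (max (f x) 0) + ENNReal.ofReal (max (-f x) 0) := by
      intro x
      rw [← ENNReal.ofReal_add (le_max_right _ _) (le_max_right _ _)]
      congr 1
      rcases le_total (f x) 0 with h | h
      · rw [abs_of_nonpos h, max_eq_right h, max_eq_left (by linarith), zero_add]
      · rw [abs_of_nonneg h, max_eq_left h, max_eq_right (by linarith), add_zero]
    calc ∫⁻ x in S, ENNReal.ofReal |f x| ∂μ
        = ∫⁻ x, (ENNReal.ofReal (max (f x) 0) + ENNReal.ofReal (max (-f x) 0)) ∂ν :=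
          lintegral_congr fun x => habs x
      _ = (∫⁻ x, ENNReal.ofReal (max (f x) 0) ∂ν)
          + ∫⁻ x, ENNReal.ofReal (max (-f x) 0) ∂ν :=
          lintegral_add_left (ENNReal.measurable_ofReal.comp (hfm.max measurable_const)) _
      _ ≤ (ENNReal.ofReal (C * r) * ∫⁻ t in Ioi (0:ℝ), G t)
          + ENNReal.ofReal (C * r) * ∫⁻ t in Ioi (0:ℝ), G (-t) := by
          rw [lay1, lay2]; exact add_le_add bnd1 bnd2
      _ = ENNReal.ofReal (C * r) * ((∫⁻ t in Ioi (0:ℝ), G t) + ∫⁻ s in Iio (0:ℝ), G s) := by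
          rw [negint, mul_add]
      _ ≤ ENNReal.ofReal (C * r) * ENNReal.ofReal T1 := mul_le_mul_right hGsum _
  -- piece 2 : over Sᶜ
  have piece2 : ∫⁻ x in Sᶜ, ENNReal.ofReal |f x| ∂μ
      ≤ ENNReal.ofReal (r ^ (-α)) * ENNReal.ofReal T2 := by
    have hpt : ∀ x ∈ Sᶜ, ENNReal.ofReal |f x|
        ≤ ENNReal.ofReal (r ^ (-α) * (w x ^ α * |f x|)) := by
      intro x hx
      refine ENNReal.ofReal_le_ofReal ?_
      have hxw : r < w x := by
        simpa [hSdef, not_le] using hx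
      have h1 : r ^ α ≤ w x ^ α := Real.rpow_le_rpow hr.le hxw.le hα.le
      have hrα : (0:ℝ) < r ^ α := Real.rpow_pos_of_pos hr α
      have hrneg : r ^ (-α) = (r ^ α)⁻¹ := Real.rpow_neg hr.le α
      rw [hrneg]
      calc |f x| = (r ^ α)⁻¹ * (r ^ α * |f x|) := by field_simp
        _ ≤ (r ^ α)⁻¹ * (w x ^ α * |f x|) := by
            exact mul_le_mul_of_nonneg_left
              (mul_le_mul_of_nonneg_right h1 (abs_nonneg _)) (inv_nonneg.2 hrα.le)
    calc ∫⁻ x in Sᶜ, ENNReal.ofReal |f x| ∂μ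
        ≤ ∫⁻ x in Sᶜ, ENNReal.ofReal (r ^ (-α) * (w x ^ α * |f x|)) ∂μ :=
          setLIntegral_mono' hS.compl hpt
      _ ≤ ∫⁻ x, ENNReal.ofReal (r ^ (-α) * (w x ^ α * |f x|)) ∂μ :=
          setLIntegral_le_lintegral _ _
      _ = ENNReal.ofReal (r ^ (-α)) * ∫⁻ x, ENNReal.ofReal (w x ^ α * |f x|) ∂μ := by
          rw [← lintegral_const_mul' _ _ ENNReal.ofReal_ne_top]
          exact lintegral_congr fun x => ENNReal.ofReal_mul (Real.rpow_nonneg hr.le _)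
      _ = ENNReal.ofReal (r ^ (-α)) * ENNReal.ofReal T2 := by
          rw [← ofReal_integral_eq_lintegral_ofReal hwabs
            (ae_of_all _ fun x => mul_nonneg (Real.rpow_nonneg (hw_pos x).le α) (abs_nonneg _))]
  -- assemble
  have hmain : ENNReal.ofReal (∫ x, |f x| ∂μ)
      ≤ ENNReal.ofReal (C * r * T1 + r ^ (-α) * T2) := by
    rw [ofReal_integral_eq_lintegral_ofReal hfint.abs (ae_of_all _ fun x => abs_nonneg _)]
    calc ∫⁻ x, ENNReal.ofReal |f x| ∂μ
        = ∫⁻ x in S, ENNReal.ofReal |f x| ∂μ + ∫⁻ x in Sᶜ, ENNReal.ofReal |f x| ∂μ :=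
          (lintegral_add_compl _ hS).symm
      _ ≤ ENNReal.ofReal (C * r) * ENNReal.ofReal T1
          + ENNReal.ofReal (r ^ (-α)) * ENNReal.ofReal T2 := add_le_add piece1 piece2
      _ = ENNReal.ofReal (C * r * T1 + r ^ (-α) * T2) := by
          rw [← ENNReal.ofReal_mul hCr, ← ENNReal.ofReal_mul (Real.rpow_nonneg hr.le _),
            ENNReal.ofReal_add (mul_nonneg hCr hT1)
              (mul_nonneg (Real.rpow_nonneg hr.le _) hT2)]
  have hfinal : ∫ x, |f x| ∂μ ≤ C * r * T1 + r ^ (-α) * T2 :=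
    (ENNReal.ofReal_le_ofReal_iff
      (add_nonneg (mul_nonneg hCr hT1)
        (mul_nonneg (Real.rpow_nonneg hr.le _) hT2))).mp hmain
  have h1 : 0 ≤ C * r * T1 := mul_nonneg hCr hT1
  have h2 : 0 ≤ r ^ (-α) * T2 := mul_nonneg (Real.rpow_nonneg hr.le _) hT2
  calc ∫ x, |f x| ∂μ ≤ C * r * T1 + r ^ (-α) * T2 := hfinal
    _ ≤ 2 * C * r * T1 + 2 * r ^ (-α) * T2 := by linarith
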